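/- For every n ≥ 1, the identity ∑_{i=0}^{n-2} i!·(n-i-2)!·C(n-1, i+1) = (n-1)! · ∑_{k=1}^{n-1} 1/k holds (as an identity of rational numbers; for n = 1 both sides are empty sums equal to 0). -/

import Mathlib

/-- For every `n ≥ 1`,
`∑_{i=0}^{n-2} i!·(n-i-2)!·C(n-1, i+1) = (n-1)! · ∑_{k=1}^{n-1} 1/k`
as an identity of rational numbers. -/
theorem factorial_choose_sum_eq_harmonic (n : ℕ) (hn : 1 ≤ n) :
    ∑ i ∈ Finset.range (n - 1),
        ((i.factorial : ℚ) * ((n - i - 2).factorial : ℚ) * ((n - 1).choose (i + 1) : ℚ)) =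
      ((n - 1).factorial : ℚ) * ∑ k ∈ Finset.Icc 1 (n - 1), (1 : ℚ) / (k : ℚ) := by
  obtain ⟨m, rfl⟩ : ∃ m, n = m + 1 := ⟨n - 1, by omega⟩
  simp only [Nat.add_sub_cancel]
  rw [← Finset.Ico_add_one_right_eq_Icc, Finset.sum_Ico_eq_sum_range, Finset.mul_sum]
  apply Finset.sum_congr rfl
  intro i hi
  rw [Finset.mem_range] at hi
  have h1 : i + 1 ≤ m := hi
  have key := Nat.choose_mul_factorial_mul_factorial h1
  have keyQ : ((m.choose (i+1) : ℚ)) * (i+1).factorial * (m - (i+1)).factorial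
      = m.factorial := by exact_mod_cast key
  have h2 : m + 1 - i - 2 = m - (i + 1) := by omega
  have h3 : ((1 : ℚ) + i) ≠ 0 := by positivity
  rw [h2, Nat.factorial_succ] at *
  push_cast at keyQ ⊢
  field_simp
  nlinarith [keyQ]
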